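/- Let A_1, …, A_m be real n×n matrices and suppose there exist nonnegative reals α_1, …, α_m with Σ_i α_i = 1 such that the convex combination Ā = Σ_i α_i A_i is Hurwitz. Then there exists a real symmetric positive definite matrix P such that, defining Ω_i = {x ∈ ℝⁿ : xᵀ(A_iᵀ P + P A_i) x < 0}, one has ℝⁿ \ {0} = ∪_{i=1}^m Ω_i. -/

import Mathlib

open Matrix Polynomial

/-- A real square matrix is Hurwitz if every eigenvalue (over ℂ) has
strictly negative real part. -/
def IsHurwitz {n : ℕ} (M : Matrix (Fin n) (Fin n) ℝ) : Prop :=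
  ∀ μ ∈ spectrum ℂ (M.map (algebraMap ℝ ℂ)), μ.re < 0

namespace LyapAux

lemma eval_charpoly {k : ℕ} {K : Type*} [Field K] (M : Matrix (Fin k) (Fin k) K) (μ : K) :
    M.charpoly.eval μ = (μ • (1 : Matrix (Fin k) (Fin k) K) - M).det := by
  rw [Matrix.charpoly, ← Polynomial.coe_evalRingHom, RingHom.map_det]
  congr 1
  ext i j
  by_cases h : i = j <;>
    simp [h, Matrix.charmatrix_apply, Matrix.one_apply, Matrix.smul_apply, Matrix.sub_apply,
      Matrix.diagonal_apply]

lemma mem_spectrum_iff_root {k : ℕ} (M : Matrix (Fin k) (Fin k) ℂ) (μ : ℂ) :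
    μ ∈ spectrum ℂ M ↔ (μ • (1 : Matrix (Fin k) (Fin k) ℂ) - M).det = 0 := by
  rw [spectrum.mem_iff, Algebra.algebraMap_eq_smul_one, Matrix.isUnit_iff_isUnit_det,
    isUnit_iff_ne_zero, not_not]

/-- Injectivity of the Lyapunov operator for Hurwitz `M`. -/
lemma lyap_inj {n : ℕ} {M : Matrix (Fin n) (Fin n) ℝ} (hM : IsHurwitz M)
    {P : Matrix (Fin n) (Fin n) ℝ} (hP : Mᵀ * P + P * M = 0) : P = 0 := by
  set Mc : Matrix (Fin n) (Fin n) ℂ := M.map (algebraMap ℝ ℂ) with hMc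
  set Pc : Matrix (Fin n) (Fin n) ℂ := P.map (algebraMap ℝ ℂ) with hPc
  have h1 : Mcᵀ * Pc + Pc * Mc = 0 := by
    have h := congrArg ((algebraMap ℝ ℂ).mapMatrix) hP
    simp only [_root_.map_add, _root_.map_mul, _root_.map_zero, RingHom.mapMatrix_apply] at h
    rwa [Matrix.transpose_map] at h
  have hcomm : Mcᵀ * Pc = Pc * (-Mc) := by
    rw [mul_neg]
    exact eq_neg_of_add_eq_zero_left h1
  have hpow : ∀ k : ℕ, (Mcᵀ) ^ k * Pc = Pc * (-Mc) ^ k := by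
    intro k; induction k with
    | zero => simp
    | succ k ih =>
        rw [pow_succ', pow_succ', mul_assoc, ih, ← mul_assoc, hcomm, mul_assoc]
  have hpoly : ∀ q : ℂ[X], (aeval (Mcᵀ) q) * Pc = Pc * (aeval (-Mc) q) := by
    intro q
    induction q using Polynomial.induction_on' with
    | add p q hp hq => simp [map_add, add_mul, mul_add, hp, hq]
    | monomial k a =>
        rw [aeval_monomial, aeval_monomial, ← Algebra.smul_def, ← Algebra.smul_def,
          smul_mul_assoc, hpow, mul_smul_comm]
  have hCH := Matrix.aeval_self_charpoly (Mcᵀ)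
  have hzero : Pc * (aeval (-Mc) (Mcᵀ).charpoly) = 0 := by
    rw [← hpoly, hCH, zero_mul]
  have hunit : IsUnit (aeval (-Mc) (Mcᵀ).charpoly) := by
    by_contra h
    rw [Polynomial.Splits.eq_prod_roots_of_monic (IsAlgClosed.splits _) ((Mcᵀ).charpoly_monic)] at h
    obtain ⟨r, hr_mem, hr_root⟩ := spectrum.exists_mem_of_not_isUnit_aeval_prod h
    -- r ∈ spectrum of -Mc, so -r ∈ spectrum of Mc, so (-r).re < 0, i.e. r.re > 0
    have h1' : (-r) ∈ spectrum ℂ Mc := by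
      rw [spectrum.mem_iff] at hr_mem ⊢
      rw [Algebra.algebraMap_eq_smul_one] at hr_mem ⊢
      intro hu
      apply hr_mem
      have : r • (1 : Matrix (Fin n) (Fin n) ℂ) - (-Mc) = -((-r) • 1 - Mc) := by
        ext i j; simp; ring
      rw [this, IsUnit.neg_iff]
      exact hu
    have hpos : 0 < r.re := by
      have := hM _ h1'
      simpa using this
    -- r is a root of charpoly of Mcᵀ, so r ∈ spectrum of Mc, so r.re < 0
    have h2' : r ∈ spectrum ℂ Mc := by
      rw [mem_spectrum_iff_root]
      have : (r • (1 : Matrix (Fin n) (Fin n) ℂ) - Mcᵀ).det = 0 := by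
        rw [← eval_charpoly]; exact hr_root
      rw [← this]
      rw [show r • (1 : Matrix (Fin n) (Fin n) ℂ) - Mcᵀ = (r • 1 - Mc)ᵀ by
        simp [Matrix.transpose_sub, Matrix.transpose_smul]]
      rw [Matrix.det_transpose]
    have := hM _ h2'
    linarith
  obtain ⟨v, hv⟩ := hunit
  have hPc0 : Pc = 0 := by
    have h5 : Pc * ((v : Matrix (Fin n) (Fin n) ℂ) * ((v⁻¹ : (Matrix (Fin n) (Fin n) ℂ)ˣ) : Matrix (Fin n) (Fin n) ℂ)) = 0 := by
      rw [← mul_assoc, hv, hzero, zero_mul]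
    rw [Units.mul_inv] at h5
    simpa using h5
  ext i j
  have h := congrFun (congrFun hPc0 i) j
  have h2 : ((P i j : ℝ) : ℂ) = 0 := by simpa [Pc, Matrix.map_apply] using h
  exact_mod_cast h2


lemma hurwitz_path {n : ℕ} {M : Matrix (Fin n) (Fin n) ℝ} (hM : IsHurwitz M)
    {u : ℝ} (hu0 : 0 ≤ u) (hu1 : u ≤ 1) :
    IsHurwitz (u • M - (1 - u) • 1) := by
  intro μ hμ
  have hmap : (u • M - (1 - u) • (1 : Matrix (Fin n) (Fin n) ℝ)).map (algebraMap ℝ ℂ)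
      = (u : ℂ) • M.map (algebraMap ℝ ℂ) - ((1 : ℂ) - (u : ℂ)) • 1 := by
    ext i j
    by_cases h : i = j <;>
      simp [Matrix.map_apply, Matrix.sub_apply, Matrix.smul_apply, Matrix.one_apply, h] <;>
      push_cast <;> ring
  rw [hmap, spectrum.mem_iff, Algebra.algebraMap_eq_smul_one] at hμ
  set Mc := M.map (algebraMap ℝ ℂ) with hMcdef
  rcases eq_or_lt_of_le hu0 with h0 | h0
  · -- u = 0 : matrix is -1, spectrum is {-1}
    have he : μ • (1 : Matrix (Fin n) (Fin n) ℂ) - ((u : ℂ) • Mc - ((1:ℂ) - (u:ℂ)) • 1)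
        = (μ + 1) • 1 := by
      rw [← h0]; push_cast; ext i j; by_cases h : i = j <;>
        simp [Matrix.sub_apply, Matrix.smul_apply, Matrix.one_apply, h] <;> ring
    rw [he] at hμ
    have hμ1 : μ + 1 = 0 := by
      by_contra hne
      exact hμ (by
        have : IsUnit (μ + 1) := isUnit_iff_ne_zero.mpr hne
        have := this.map (algebraMap ℂ (Matrix (Fin n) (Fin n) ℂ))
        rwa [Algebra.algebraMap_eq_smul_one] at this)
    have hμeq : μ = -1 := eq_neg_of_add_eq_zero_left hμ1
    simp [hμeq]
  · -- u > 0
    have hu : (u : ℂ) ≠ 0 := by exact_mod_cast ne_of_gt h0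
    set ν : ℂ := (μ + 1 - (u : ℂ)) / (u : ℂ) with hν
    have hfac : μ • (1 : Matrix (Fin n) (Fin n) ℂ) - ((u : ℂ) • Mc - ((1:ℂ) - (u:ℂ)) • 1)
        = (u : ℂ) • (ν • 1 - Mc) := by
      rw [smul_sub, smul_smul, hν, mul_div_cancel₀ _ hu]
      ext i j; by_cases h : i = j <;>
        simp [Matrix.sub_apply, Matrix.smul_apply, Matrix.one_apply, h] <;> ring
    rw [hfac] at hμ
    have hνmem : ν ∈ spectrum ℂ Mc := by
      rw [spectrum.mem_iff, Algebra.algebraMap_eq_smul_one]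
      intro hu2
      apply hμ
      have h1 : IsUnit ((u : ℂ) • (1 : Matrix (Fin n) (Fin n) ℂ)) := by
        have : IsUnit (u : ℂ) := isUnit_iff_ne_zero.mpr hu
        have := this.map (algebraMap ℂ (Matrix (Fin n) (Fin n) ℂ))
        rwa [Algebra.algebraMap_eq_smul_one] at this
      have := h1.mul hu2
      rwa [Matrix.smul_mul, one_mul] at this
    have hre : ν.re < 0 := hM _ hνmem
    have hμν : μ = (u : ℂ) * ν - (1 - (u : ℂ)) := by
      rw [hν, mul_div_cancel₀ _ hu]; ring
    have : μ.re = u * ν.re - (1 - u) := by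
      rw [hμν]; simp [Complex.mul_re, Complex.sub_re]
    nlinarith [this, hre, h0, hu1]


section

variable {n : ℕ}

attribute [local instance] Matrix.normedAddCommGroup Matrix.normedSpace

lemma quad_expand (A : Matrix (Fin n) (Fin n) ℝ) (x : Fin n → ℝ) :
    x ⬝ᵥ A *ᵥ x = ∑ i, x i * ∑ j, A i j * x j := by
  simp [dotProduct, Matrix.mulVec]

lemma posDef_of_sphere {A : Matrix (Fin n) (Fin n) ℝ} (hsym : A.IsSymm)
    (h : ∀ x : Fin n → ℝ, ‖x‖ = 1 → 0 < x ⬝ᵥ A *ᵥ x) : A.PosDef := by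
  rw [Matrix.posDef_iff_dotProduct_mulVec]
  constructor
  · rw [Matrix.IsHermitian, Matrix.conjTranspose_eq_transpose_of_trivial]
    exact hsym
  · intro x hx
    have hc : (0 : ℝ) < ‖x‖ := norm_pos_iff.mpr hx
    set u : Fin n → ℝ := ‖x‖⁻¹ • x with hu
    have hu1 : ‖u‖ = 1 := by
      rw [hu, norm_smul, norm_inv, norm_norm, inv_mul_cancel₀ hc.ne']
    have hxu : x = ‖x‖ • u := by
      rw [hu, smul_smul, mul_inv_cancel₀ hc.ne', one_smul]
    have key : x ⬝ᵥ A *ᵥ x = ‖x‖ * (‖x‖ * (u ⬝ᵥ A *ᵥ u)) := by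
      conv_lhs => rw [hxu]
      rw [smul_dotProduct, Matrix.mulVec_smul, dotProduct_smul]
      simp [smul_eq_mul]
    have : (0:ℝ) < x ⬝ᵥ A *ᵥ x := by
      rw [key]; exact mul_pos hc (mul_pos hc (h u hu1))
    simpa using this

set_option maxHeartbeats 1000000 in
/-- The Lyapunov existence theorem for Hurwitz matrices. -/
theorem exists_lyap {M : Matrix (Fin n) (Fin n) ℝ} (hM : IsHurwitz M) :
    ∃ P : Matrix (Fin n) (Fin n) ℝ, P.IsSymm ∧ P.PosDef ∧ Mᵀ * P + P * M = -1 := by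
  classical
  -- the base Lyapunov operator
  let T₀ : Matrix (Fin n) (Fin n) ℝ →ₗ[ℝ] Matrix (Fin n) (Fin n) ℝ :=
    { toFun := fun P => Mᵀ * P + P * M
      map_add' := fun P Q => by noncomm_ring
      map_smul' := fun c P => by
        simp [Matrix.mul_smul, Matrix.smul_mul, smul_add] }
  let T₁ : Matrix (Fin n) (Fin n) ℝ →L[ℝ] Matrix (Fin n) (Fin n) ℝ := LinearMap.toContinuousLinearMap T₀
  -- the path of matrices
  set Ms : ℝ → Matrix (Fin n) (Fin n) ℝ := fun u => u • M - (1 - u) • 1 with hMs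
  -- the path of Lyapunov operators
  set Lc : ℝ → (Matrix (Fin n) (Fin n) ℝ →L[ℝ] Matrix (Fin n) (Fin n) ℝ) := fun u => u • T₁ + (2 * u - 2) • (1 : Matrix (Fin n) (Fin n) ℝ →L[ℝ] Matrix (Fin n) (Fin n) ℝ) with hLc
  have Lapp : ∀ u (P : Matrix (Fin n) (Fin n) ℝ), Lc u P = (Ms u)ᵀ * P + P * (Ms u) := by
    intro u P
    show u • (Mᵀ * P + P * M) + (2 * u - 2) • P =
      (u • M - (1 - u) • 1)ᵀ * P + P * (u • M - (1 - u) • 1)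
    rw [Matrix.transpose_sub, Matrix.transpose_smul, Matrix.transpose_smul, Matrix.transpose_one,
      Matrix.sub_mul, Matrix.mul_sub, Matrix.smul_mul, Matrix.smul_mul, Matrix.mul_smul,
      Matrix.mul_smul, one_mul, mul_one]
    module
  have hLcCont : Continuous Lc := by
    apply Continuous.add
    · exact continuous_id.smul continuous_const
    · exact ((continuous_const.mul continuous_id).sub continuous_const).smul continuous_const
  have hunit : ∀ u : ℝ, 0 ≤ u → u ≤ 1 → IsUnit (Lc u) := by
    intro u hu0 hu1
    have hinj : Function.Injective (Lc u) := by
      intro P Q h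
      have h0 : Lc u (P - Q) = 0 := by rw [map_sub, h, sub_self]
      rw [Lapp] at h0
      simp only [hMs] at h0
      have := lyap_inj (hurwitz_path hM hu0 hu1) h0
      exact sub_eq_zero.mp this
    have hsurj : Function.Surjective (Lc u) := by
      have : Function.Injective ((Lc u) : Matrix (Fin n) (Fin n) ℝ →ₗ[ℝ] Matrix (Fin n) (Fin n) ℝ) := hinj
      exact LinearMap.injective_iff_surjective.mp this
    exact ContinuousLinearMap.isUnit_iff_bijective.mpr ⟨hinj, hsurj⟩
  -- clamping
  set σ : ℝ → ℝ := fun s => max 0 (min s 1) with hσ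
  have hσ0 : ∀ s, 0 ≤ σ s := fun s => le_max_left _ _
  have hσ1 : ∀ s, σ s ≤ 1 := fun s => max_le zero_le_one (min_le_right _ _)
  have hσcont : Continuous σ := continuous_const.max (continuous_id.min continuous_const)
  set F : ℝ → Matrix (Fin n) (Fin n) ℝ := fun s => Ring.inverse (Lc (σ s)) (-1) with hF
  have hLF : ∀ s, Lc (σ s) (F s) = -1 := by
    intro s
    have h := Ring.mul_inverse_cancel _ (hunit (σ s) (hσ0 s) (hσ1 s))
    calc Lc (σ s) (F s) = (Lc (σ s) * Ring.inverse (Lc (σ s))) (-1) := rfl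
      _ = (1 : Matrix (Fin n) (Fin n) ℝ →L[ℝ] Matrix (Fin n) (Fin n) ℝ) (-1) := by rw [h]
      _ = -1 := rfl
  have hFeq : ∀ s, (Ms (σ s))ᵀ * F s + F s * Ms (σ s) = -1 := by
    intro s; rw [← Lapp]; exact hLF s
  have hFsymm : ∀ s, (F s).IsSymm := by
    intro s
    have hbij : Function.Bijective (Lc (σ s)) := ContinuousLinearMap.isUnit_iff_bijective.mp (hunit (σ s) (hσ0 s) (hσ1 s))
    apply hbij.injective
    rw [Lapp, Lapp]
    have h := congrArg Matrix.transpose (hFeq s)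
    rw [Matrix.transpose_add, Matrix.transpose_mul, Matrix.transpose_mul, Matrix.transpose_transpose,
      Matrix.transpose_neg, Matrix.transpose_one] at h
    rw [show (F s)ᵀ * Ms (σ s) + (Ms (σ s))ᵀ * (F s)ᵀ = (Ms (σ s))ᵀ * (F s)ᵀ + (F s)ᵀ * Ms (σ s)
      from add_comm _ _] at h
    rw [h, hFeq]
  have hFcont : Continuous F := by
    have h1 : Continuous fun s => Ring.inverse (Lc (σ s)) := by
      rw [continuous_iff_continuousAt]
      intro s
      have h2 : ContinuousAt Ring.inverse (Lc (σ s)) := by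
        haveI hc : CompleteSpace (Matrix (Fin n) (Fin n) ℝ →L[ℝ] Matrix (Fin n) (Fin n) ℝ) := FiniteDimensional.complete ℝ _
        letI : NormedRing (Matrix (Fin n) (Fin n) ℝ →L[ℝ] Matrix (Fin n) (Fin n) ℝ) := ContinuousLinearMap.toNormedRing
        haveI : HasSummableGeomSeries (Matrix (Fin n) (Fin n) ℝ →L[ℝ] Matrix (Fin n) (Fin n) ℝ) :=
          @instHasSummableGeomSeriesOfCompleteSpace _ _ hc
        have h3 := NormedRing.inverse_continuousAt (hunit (σ s) (hσ0 s) (hσ1 s)).unit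
        rwa [IsUnit.unit_spec] at h3
      exact ContinuousAt.comp (x := s) h2
        (ContinuousAt.comp (x := s) (hLcCont.continuousAt) (hσcont.continuousAt))
    exact (ContinuousLinearMap.apply ℝ (Matrix (Fin n) (Fin n) ℝ) (-1 : Matrix (Fin n) (Fin n) ℝ)).continuous.comp h1
  -- continuity of the quadratic form
  have hG : Continuous fun p : ℝ × (Fin n → ℝ) => p.2 ⬝ᵥ (F p.1) *ᵥ p.2 := by
    have heq : (fun p : ℝ × (Fin n → ℝ) => p.2 ⬝ᵥ (F p.1) *ᵥ p.2)
        = fun p => ∑ i, p.2 i * ∑ j, F p.1 i j * p.2 j :=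
      funext fun p => quad_expand (F p.1) p.2
    rw [heq]
    apply continuous_finset_sum
    intro i _
    apply Continuous.mul
    · exact (continuous_apply i).comp continuous_snd
    · apply continuous_finset_sum
      intro j _
      exact (((continuous_apply j).comp ((continuous_apply i).comp
        (hFcont.comp continuous_fst))).mul ((continuous_apply j).comp continuous_snd))
  -- the set where F is positive definite
  set U : Set ℝ := {s | (F s).PosDef} with hU
  have hopen : IsOpen U := by
    rw [isOpen_iff_mem_nhds]
    intro s0 hs0
    have hK : IsCompact (Metric.sphere (0 : Fin n → ℝ) 1) := isCompact_sphere _ _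
    have hev : ∀ᶠ s in nhds s0, ∀ y ∈ Metric.sphere (0 : Fin n → ℝ) 1,
        0 < y ⬝ᵥ (F s) *ᵥ y := by
      apply hK.eventually_forall_of_forall_eventually
      intro y hy
      have hy1 : ‖y‖ = 1 := by rwa [mem_sphere_zero_iff_norm] at hy
      have hy0 : y ≠ 0 := by intro h0; rw [h0] at hy1; simp at hy1
      have hpos : 0 < y ⬝ᵥ (F s0) *ᵥ y := by
        have := hs0.dotProduct_mulVec_pos hy0
        simpa using this
      exact (hG.tendsto (s0, y)).eventually (eventually_gt_nhds hpos)
    refine Filter.mem_of_superset hev ?_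
    intro s hs
    exact posDef_of_sphere (hFsymm s) fun x hx => hs x (mem_sphere_zero_iff_norm.mpr hx)
  have hclosed : IsClosed U := by
    apply IsSeqClosed.isClosed
    intro sk s hsk hlim
    have herm : (F s).IsHermitian := by
      rw [Matrix.IsHermitian, Matrix.conjTranspose_eq_transpose_of_trivial]
      exact hFsymm s
    have hpsd : (F s).PosSemidef := by
      refine Matrix.PosSemidef.of_dotProduct_mulVec_nonneg herm fun x => ?_
      have htend : Filter.Tendsto (fun k => x ⬝ᵥ (F (sk k)) *ᵥ x) Filter.atTop
          (nhds (x ⬝ᵥ (F s) *ᵥ x)) := by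
        have h2 : Filter.Tendsto (fun k => ((sk k, x) : ℝ × (Fin n → ℝ))) Filter.atTop
            (nhds (s, x)) := hlim.prodMk_nhds tendsto_const_nhds
        exact (hG.tendsto (s, x)).comp h2
      have hk : ∀ k, 0 ≤ x ⬝ᵥ (F (sk k)) *ᵥ x := by
        intro k
        have := (hsk k).posSemidef.dotProduct_mulVec_nonneg x
        simpa using this
      have := ge_of_tendsto htend (Filter.Eventually.of_forall hk)
      simpa using this
    have hker : ∀ x : Fin n → ℝ, F s *ᵥ x = 0 → x = 0 := by
      intro x h0
      have e1 : x ⬝ᵥ ((Ms (σ s))ᵀ * F s) *ᵥ x = 0 := by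
        rw [← Matrix.mulVec_mulVec, h0, Matrix.mulVec_zero, dotProduct_zero]
      have e2 : x ⬝ᵥ (F s * Ms (σ s)) *ᵥ x = 0 := by
        rw [← Matrix.mulVec_mulVec, Matrix.dotProduct_mulVec, ← Matrix.mulVec_transpose,
          (hFsymm s).eq, h0, zero_dotProduct]
      have h1 := congrArg (fun Q => x ⬝ᵥ Q *ᵥ x) (hFeq s)
      simp only [Matrix.add_mulVec, dotProduct_add] at h1
      rw [e1, e2] at h1
      have h2 : x ⬝ᵥ ((-1 : Matrix (Fin n) (Fin n) ℝ) *ᵥ x) = -(x ⬝ᵥ x) := by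
        rw [Matrix.neg_mulVec, Matrix.one_mulVec, dotProduct_neg]
      rw [h2] at h1
      have : x ⬝ᵥ x = 0 := by linarith
      exact dotProduct_self_eq_zero.mp this
    refine Matrix.PosDef.of_dotProduct_mulVec_pos herm fun x hx => ?_
    have hle := hpsd.dotProduct_mulVec_nonneg x
    rcases eq_or_lt_of_le hle with heq | hlt
    · exfalso
      apply hx
      apply hker
      exact (hpsd.dotProduct_mulVec_zero_iff x).mp heq.symm
    · exact hlt
  -- 0 ∈ U
  have hσzero : σ 0 = 0 := by simp [hσ]
  have h0mem : (0 : ℝ) ∈ U := by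
    have hhalf : Lc 0 ((2⁻¹ : ℝ) • (1 : Matrix (Fin n) (Fin n) ℝ)) = -1 := by
      rw [Lapp]
      show (Ms 0)ᵀ * ((2⁻¹ : ℝ) • 1) + ((2⁻¹ : ℝ) • 1) * Ms 0 = -1
      have : Ms 0 = -1 := by simp [hMs]
      rw [this]
      ext i j
      by_cases h : i = j <;>
        simp [Matrix.mul_smul, Matrix.smul_mul, Matrix.one_apply, h] <;> norm_num
    have hF0 : Lc 0 (F 0) = -1 := by
      have := hLF 0; rwa [hσzero] at this
    have hbij := ContinuousLinearMap.isUnit_iff_bijective.mp (hunit 0 le_rfl zero_le_one)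
    have hF0eq : F 0 = (2⁻¹ : ℝ) • (1 : Matrix (Fin n) (Fin n) ℝ) := hbij.injective (hF0.trans hhalf.symm)
    show (F 0).PosDef
    rw [hF0eq]
    apply posDef_of_sphere
    · rw [Matrix.IsSymm]
      rw [Matrix.transpose_smul, Matrix.transpose_one]
    · intro x hx
      have hx0 : x ≠ 0 := by intro h0; rw [h0] at hx; simp at hx
      have h1 : x ⬝ᵥ ((2⁻¹ : ℝ) • (1 : Matrix (Fin n) (Fin n) ℝ)) *ᵥ x = 2⁻¹ * (x ⬝ᵥ x) := by
        rw [Matrix.smul_mulVec, Matrix.one_mulVec, dotProduct_smul, smul_eq_mul]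
      rw [h1]
      have h2 : 0 ≤ x ⬝ᵥ x := Finset.sum_nonneg fun i _ => mul_self_nonneg _
      have h3 : x ⬝ᵥ x ≠ 0 := fun h => hx0 (dotProduct_self_eq_zero.mp h)
      have : 0 < x ⬝ᵥ x := lt_of_le_of_ne h2 (Ne.symm h3)
      positivity
  -- connectedness
  have hUuniv : U = Set.univ := by
    rcases isClopen_iff.mp ⟨hclosed, hopen⟩ with h | h
    · exact absurd (h ▸ h0mem) (Set.notMem_empty 0)
    · exact h
  have h1mem : (1 : ℝ) ∈ U := hUuniv ▸ Set.mem_univ 1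
  have hσone : σ 1 = 1 := by simp [hσ]
  have hMs1 : Ms (σ 1) = M := by rw [hσone]; simp [hMs]
  refine ⟨F 1, hFsymm 1, h1mem, ?_⟩
  have := hFeq 1
  rwa [hMs1] at this

end
end LyapAux

set_option maxHeartbeats 800000 in
/-- if a convex combination of the A_i is Hurwitz, there is a
symmetric positive definite P such that the regions
Ω_i = {x : xᵀ(A_iᵀP + PA_i)x < 0} cover ℝⁿ \ {0}. -/
theorem exists_common_lyapunov_regions_cover
    {n m : ℕ} (A : Fin m → Matrix (Fin n) (Fin n) ℝ)
    (α : Fin m → ℝ) (hα : ∀ i, 0 ≤ α i) (hsum : ∑ i, α i = 1)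
    (hHurwitz : IsHurwitz (∑ i, α i • A i)) :
    ∃ P : Matrix (Fin n) (Fin n) ℝ, P.IsSymm ∧ P.PosDef ∧
      {x : Fin n → ℝ | x ≠ 0} =
        ⋃ i : Fin m, {x : Fin n → ℝ | x ⬝ᵥ ((A i)ᵀ * P + P * A i).mulVec x < 0} := by
  obtain ⟨P, hsymm, hpd, heq⟩ := LyapAux.exists_lyap hHurwitz
  refine ⟨P, hsymm, hpd, ?_⟩
  ext x
  simp only [Set.mem_setOf_eq, Set.mem_iUnion]
  constructor
  · intro hx
    let φ : Matrix (Fin n) (Fin n) ℝ →ₗ[ℝ] ℝ :=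
      { toFun := fun B => x ⬝ᵥ (Bᵀ * P + P * B) *ᵥ x
        map_add' := by
          intro B C
          simp only [Matrix.transpose_add, Matrix.add_mul, Matrix.mul_add, Matrix.add_mulVec,
            dotProduct_add]
          ring
        map_smul' := by
          intro c B
          simp only [Matrix.transpose_smul, Matrix.smul_mul, Matrix.mul_smul, RingHom.id_apply,
            ← smul_add, Matrix.smul_mulVec, dotProduct_smul, smul_eq_mul] }
    have hkey : ∑ i, α i * (x ⬝ᵥ ((A i)ᵀ * P + P * A i) *ᵥ x)
        = x ⬝ᵥ ((-1 : Matrix (Fin n) (Fin n) ℝ) *ᵥ x) := by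
      calc ∑ i, α i * (x ⬝ᵥ ((A i)ᵀ * P + P * A i) *ᵥ x) = ∑ i, φ (α i • A i) := by
            apply Finset.sum_congr rfl
            intro i _
            rw [LinearMap.map_smul, smul_eq_mul]
            rfl
        _ = φ (∑ i, α i • A i) := (map_sum φ (fun i => α i • A i) Finset.univ).symm
        _ = x ⬝ᵥ ((-1 : Matrix (Fin n) (Fin n) ℝ) *ᵥ x) := by
            show x ⬝ᵥ ((∑ i, α i • A i)ᵀ * P + P * ∑ i, α i • A i) *ᵥ x = _
            rw [heq]
    have hxx : 0 < x ⬝ᵥ x := by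
      have h2 : 0 ≤ x ⬝ᵥ x := Finset.sum_nonneg fun i _ => mul_self_nonneg _
      have h3 : x ⬝ᵥ x ≠ 0 := fun h => hx (dotProduct_self_eq_zero.mp h)
      exact lt_of_le_of_ne h2 (Ne.symm h3)
    have hneg : x ⬝ᵥ ((-1 : Matrix (Fin n) (Fin n) ℝ) *ᵥ x) < 0 := by
      rw [Matrix.neg_mulVec, Matrix.one_mulVec, dotProduct_neg]
      linarith
    have hsumlt : ∑ i, α i * (x ⬝ᵥ ((A i)ᵀ * P + P * A i) *ᵥ x) < ∑ _i : Fin m, (0 : ℝ) := by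
      rw [Finset.sum_const_zero, hkey]
      exact hneg
    obtain ⟨i, _, hi⟩ := Finset.exists_lt_of_sum_lt hsumlt
    refine ⟨i, ?_⟩
    by_contra hcon
    push_neg at hcon
    exact absurd hi (not_lt.mpr (mul_nonneg (hα i) hcon))
  · rintro ⟨i, hi⟩
    intro h0
    rw [h0] at hi
    simp at hi
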